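/- Let μ and ν be probability measures on ℝ with all moments finite. For any α, β ∈ {0,1}, any p ≥ 1 and any words t_1,…,t_p ∈ S, the filtered convolution satisfies (\hat{μ}⋆\hat{ν})(P^α X(t_1) P X(t_2) P ⋯ P X(t_p) P^β) = (\hat{μ}⋆\hat{ν})(X(t_1)) ⋯ (\hat{μ}⋆\hat{ν})(X(t_p)); i.e., P acts as a separator of words for the convolved functional. -/

import Mathlib

open scoped TensorProduct

/-- The two-letter alphabet `{z, w}`. -/
inductive Letter | z | w
deriving DecidableEq

/-- Words: elements of the free monoid `S = FS({z,w})`. -/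
abbrev Word := List Letter

/-- The three generators `X, X', P` of the algebra `B`. -/
inductive Gen | X | X' | P
deriving DecidableEq, BEq

/-- The free unital associative `ℂ`-algebra on the generators `X, X', P`. -/
abbrev B := FreeAlgebra ℂ Gen

/-- `X(z) = X`, `X(w) = X'`. -/
noncomputable def Xletter (l : Letter) : B :=
  FreeAlgebra.ι ℂ (match l with | .z => Gen.X | .w => Gen.X')

/-- `X(t) = X(t₁) ⋯ X(t_r)` for a word `t ∈ S`. -/
noncomputable def Xword (t : Word) : B := (t.map Xletter).prod

/-- The projection generator `P`. -/
noncomputable def Pgen : B := FreeAlgebra.ι ℂ Gen.P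

/-- Value of the functional `\hat μ` (built from the moment sequence `m`, `m 0 = 1`)
on a basis word of `B`: split the word into maximal `P`-free blocks and take the
product of `m (length of block)`. -/
def wordVal (m : ℕ → ℂ) (l : List Gen) : ℂ :=
  ((l.splitOn Gen.P).map (fun t => if t = [] then 1 else m t.length)).prod

/-- The linear functional `\hat μ : B → ℂ` associated with a moment sequence `m`. -/
noncomputable def hatL (m : ℕ → ℂ) : B →ₗ[ℂ] ℂ :=
  (Finsupp.linearCombination ℂ (fun x : FreeMonoid Gen => wordVal m (FreeMonoid.toList x))).comp
    ((MonoidAlgebra.coeffLinearEquiv ℂ : MonoidAlgebra ℂ (FreeMonoid Gen) ≃ₗ[ℂ] (FreeMonoid Gen →₀ ℂ)).toLinearMap.comp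
    (FreeAlgebra.equivMonoidAlgebraFreeMonoid : B ≃ₐ[ℂ] MonoidAlgebra ℂ (FreeMonoid Gen)).toLinearMap)

/-- The coproduct `Δ : B → B ⊗ B`, `Δ X = X⊗1 + 1⊗X`, `Δ X' = X'⊗P + P⊗X'`, `Δ P = P⊗P`. -/
noncomputable def Cop : B →ₐ[ℂ] B ⊗[ℂ] B :=
  FreeAlgebra.lift ℂ (fun g : Gen => match g with
    | .X => FreeAlgebra.ι ℂ Gen.X ⊗ₜ[ℂ] 1 + 1 ⊗ₜ[ℂ] FreeAlgebra.ι ℂ Gen.X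
    | .X' => FreeAlgebra.ι ℂ Gen.X' ⊗ₜ[ℂ] Pgen + Pgen ⊗ₜ[ℂ] FreeAlgebra.ι ℂ Gen.X'
    | .P => Pgen ⊗ₜ[ℂ] Pgen)

/-- The functional `φ ⊗ ψ` on `B ⊗ B`. -/
noncomputable def tensorFunc (φ ψ : B →ₗ[ℂ] ℂ) : B ⊗[ℂ] B →ₗ[ℂ] ℂ :=
  (LinearMap.mul' ℂ ℂ).comp (TensorProduct.map φ ψ)

/-- The filtered convolution `φ ⋆ ψ = (φ ⊗ ψ) ∘ Δ`. -/
noncomputable def filtConv (φ ψ : B →ₗ[ℂ] ℂ) : B →ₗ[ℂ] ℂ :=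
  (tensorFunc φ ψ).comp Cop.toLinearMap

/-- The `n`-th moment of a measure on `ℝ`, as a complex number. -/
noncomputable def mom (μ : MeasureTheory.Measure ℝ) (n : ℕ) : ℂ :=
  ((∫ x, x ^ n ∂μ : ℝ) : ℂ)


/-! ### Auxiliary lemmas -/

noncomputable abbrev rhoB : B ≃ₐ[ℂ] MonoidAlgebra ℂ (FreeMonoid Gen) :=
  FreeAlgebra.equivMonoidAlgebraFreeMonoid

theorem splitOn_sep (l1 l2 : List Gen) :
    (l1 ++ Gen.P :: l2).splitOn Gen.P = l1.splitOn Gen.P ++ l2.splitOn Gen.P := by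
  induction l1 with
  | nil => simp [List.splitOn, List.splitOnP_cons, show (Gen.P == Gen.P) = true from rfl]
  | cons a l1 ih =>
    simp only [List.cons_append, List.splitOn, List.splitOnP_cons] at *
    cases hb : (a == Gen.P) with
    | true => simp [hb, ih]
    | false =>
      simp only [hb, Bool.false_eq_true, if_false, ih]
      obtain ⟨x, xs, hx⟩ := List.exists_cons_of_ne_nil
        (List.splitOnP_ne_nil (fun x => x == Gen.P) l1)
      rw [hx]; simp

theorem wordVal_sep (m : ℕ → ℂ) (l1 l2 : List Gen) :
    wordVal m (l1 ++ Gen.P :: l2) = wordVal m l1 * wordVal m l2 := by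
  simp [wordVal, splitOn_sep]

theorem wordVal_nil (m : ℕ → ℂ) : wordVal m [] = 1 := by
  simp [wordVal, List.splitOn]

theorem wordVal_P_left (m : ℕ → ℂ) (l : List Gen) :
    wordVal m (Gen.P :: l) = wordVal m l := by
  have := wordVal_sep m [] l
  simpa [wordVal_nil] using this

theorem wordVal_P_right (m : ℕ → ℂ) (l : List Gen) :
    wordVal m (l ++ [Gen.P]) = wordVal m l := by
  have := wordVal_sep m l []
  simpa [wordVal_nil] using this

theorem rhoB_P : rhoB Pgen = MonoidAlgebra.single (FreeMonoid.of Gen.P) 1 := by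
  simp [Pgen, FreeAlgebra.equivMonoidAlgebraFreeMonoid]

theorem hatL_symm_single (m : ℕ → ℂ) (u : FreeMonoid Gen) (c : ℂ) :
    hatL m (rhoB.symm (MonoidAlgebra.single u c)) = c * wordVal m u.toList := by
  simp only [hatL, LinearMap.comp_apply]
  erw [AlgEquiv.apply_symm_apply]
  change (Finsupp.linearCombination ℂ _) (Finsupp.single u c) = _
  erw [Finsupp.linearCombination_single]
  rw [smul_eq_mul]

theorem hatL_sep (m : ℕ → ℂ) (a b : B) :
    hatL m (a * Pgen * b) = hatL m a * hatL m b := by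
  have key : ∀ f g : MonoidAlgebra ℂ (FreeMonoid Gen),
      hatL m (rhoB.symm f * Pgen * rhoB.symm g) = hatL m (rhoB.symm f) * hatL m (rhoB.symm g) := by
    intro f g
    induction f using MonoidAlgebra.induction_linear with
    | zero => simp
    | add f1 f2 h1 h2 => simp only [map_add, add_mul, h1, h2]
    | single u c =>
      induction g using MonoidAlgebra.induction_linear with
      | zero => simp
      | add g1 g2 h1 h2 => simp only [map_add, mul_add, h1, h2]
      | single v d =>
        have : (rhoB.symm (MonoidAlgebra.single u c)) * Pgen * (rhoB.symm (MonoidAlgebra.single v d))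
            = rhoB.symm (MonoidAlgebra.single (u * FreeMonoid.of Gen.P * v) (c * d)) := by
          rw [show Pgen = rhoB.symm (MonoidAlgebra.single (FreeMonoid.of Gen.P) 1) by
              rw [← rhoB_P]; simp]
          rw [← map_mul, ← map_mul, MonoidAlgebra.single_mul_single,
            MonoidAlgebra.single_mul_single, mul_one]
        rw [this, hatL_symm_single, hatL_symm_single, hatL_symm_single]
        have htl : (u * FreeMonoid.of Gen.P * v).toList
            = u.toList ++ Gen.P :: v.toList := by
          simp [FreeMonoid.toList_of_mul]
        rw [htl, wordVal_sep]
        ring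
  have ha := rhoB.symm_apply_apply a
  have hb := rhoB.symm_apply_apply b
  calc hatL m (a * Pgen * b) = hatL m (rhoB.symm (rhoB a) * Pgen * rhoB.symm (rhoB b)) := by
        rw [ha, hb]
    _ = hatL m (rhoB.symm (rhoB a)) * hatL m (rhoB.symm (rhoB b)) := key _ _
    _ = hatL m a * hatL m b := by rw [ha, hb]

theorem hatL_P_left (m : ℕ → ℂ) (a : B) : hatL m (Pgen * a) = hatL m a := by
  have key : ∀ f : MonoidAlgebra ℂ (FreeMonoid Gen),
      hatL m (Pgen * rhoB.symm f) = hatL m (rhoB.symm f) := by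
    intro f
    induction f using MonoidAlgebra.induction_linear with
    | zero => simp
    | add f1 f2 h1 h2 => simp only [map_add, mul_add, h1, h2]
    | single u c =>
      have : Pgen * rhoB.symm (MonoidAlgebra.single u c)
          = rhoB.symm (MonoidAlgebra.single (FreeMonoid.of Gen.P * u) c) := by
        rw [show Pgen = rhoB.symm (MonoidAlgebra.single (FreeMonoid.of Gen.P) 1) by
            rw [← rhoB_P]; simp]
        rw [← map_mul, MonoidAlgebra.single_mul_single, one_mul]
      rw [this, hatL_symm_single, hatL_symm_single]
      have : (FreeMonoid.of Gen.P * u).toList = Gen.P :: u.toList := by simp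
      rw [this, wordVal_P_left]
  have ha := rhoB.symm_apply_apply a
  calc hatL m (Pgen * a) = hatL m (Pgen * rhoB.symm (rhoB a)) := by rw [ha]
    _ = hatL m (rhoB.symm (rhoB a)) := key _
    _ = hatL m a := by rw [ha]

theorem hatL_P_right (m : ℕ → ℂ) (a : B) : hatL m (a * Pgen) = hatL m a := by
  have key : ∀ f : MonoidAlgebra ℂ (FreeMonoid Gen),
      hatL m (rhoB.symm f * Pgen) = hatL m (rhoB.symm f) := by
    intro f
    induction f using MonoidAlgebra.induction_linear with
    | zero => simp
    | add f1 f2 h1 h2 => simp only [map_add, add_mul, h1, h2]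
    | single u c =>
      have : rhoB.symm (MonoidAlgebra.single u c) * Pgen
          = rhoB.symm (MonoidAlgebra.single (u * FreeMonoid.of Gen.P) c) := by
        rw [show Pgen = rhoB.symm (MonoidAlgebra.single (FreeMonoid.of Gen.P) 1) by
            rw [← rhoB_P]; simp]
        rw [← map_mul, MonoidAlgebra.single_mul_single, mul_one]
      rw [this, hatL_symm_single, hatL_symm_single]
      have : (u * FreeMonoid.of Gen.P).toList = u.toList ++ [Gen.P] := by simp
      rw [this, wordVal_P_right]
  have ha := rhoB.symm_apply_apply a
  calc hatL m (a * Pgen) = hatL m (rhoB.symm (rhoB a) * Pgen) := by rw [ha]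
    _ = hatL m (rhoB.symm (rhoB a)) := key _
    _ = hatL m a := by rw [ha]

theorem tensorFunc_tmul (φ ψ : B →ₗ[ℂ] ℂ) (a b : B) :
    tensorFunc φ ψ (a ⊗ₜ[ℂ] b) = φ a * ψ b := by
  simp [tensorFunc, LinearMap.mul'_apply]

theorem Cop_P : Cop Pgen = Pgen ⊗ₜ[ℂ] Pgen := by
  simp [Cop, Pgen, FreeAlgebra.lift_ι_apply]

section
variable (φ ψ : B →ₗ[ℂ] ℂ)
  (hφsep : ∀ a b : B, φ (a * Pgen * b) = φ a * φ b)
  (hψsep : ∀ a b : B, ψ (a * Pgen * b) = ψ a * ψ b)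
  (hφl : ∀ a : B, φ (Pgen * a) = φ a)
  (hψl : ∀ a : B, ψ (Pgen * a) = ψ a)
  (hφr : ∀ a : B, φ (a * Pgen) = φ a)
  (hψr : ∀ a : B, ψ (a * Pgen) = ψ a)

include hφsep hψsep in
theorem filtConv_sep (a b : B) :
    filtConv φ ψ (a * Pgen * b) = filtConv φ ψ a * filtConv φ ψ b := by
  have key : ∀ x y : B ⊗[ℂ] B,
      tensorFunc φ ψ (x * (Pgen ⊗ₜ[ℂ] Pgen) * y)
        = tensorFunc φ ψ x * tensorFunc φ ψ y := by
    intro x y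
    induction x using TensorProduct.induction_on with
    | zero => simp
    | add x1 x2 h1 h2 => simp only [add_mul, map_add, h1, h2]
    | tmul u v =>
      induction y using TensorProduct.induction_on with
      | zero => simp
      | add y1 y2 h1 h2 => simp only [mul_add, map_add, h1, h2]
      | tmul u' v' =>
        rw [Algebra.TensorProduct.tmul_mul_tmul, Algebra.TensorProduct.tmul_mul_tmul,
          tensorFunc_tmul, tensorFunc_tmul, tensorFunc_tmul, hφsep, hψsep]
        ring
  simp only [filtConv, LinearMap.comp_apply, AlgHom.toLinearMap_apply, map_mul, Cop_P]
  exact key _ _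

include hφl hψl in
theorem filtConv_P_left (a : B) : filtConv φ ψ (Pgen * a) = filtConv φ ψ a := by
  have key : ∀ x : B ⊗[ℂ] B,
      tensorFunc φ ψ ((Pgen ⊗ₜ[ℂ] Pgen) * x) = tensorFunc φ ψ x := by
    intro x
    induction x using TensorProduct.induction_on with
    | zero => simp
    | add x1 x2 h1 h2 => simp only [mul_add, map_add, h1, h2]
    | tmul u v =>
      rw [Algebra.TensorProduct.tmul_mul_tmul, tensorFunc_tmul, tensorFunc_tmul, hφl, hψl]
  simp only [filtConv, LinearMap.comp_apply, AlgHom.toLinearMap_apply, map_mul, Cop_P]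
  exact key _

include hφr hψr in
theorem filtConv_P_right (a : B) : filtConv φ ψ (a * Pgen) = filtConv φ ψ a := by
  have key : ∀ x : B ⊗[ℂ] B,
      tensorFunc φ ψ (x * (Pgen ⊗ₜ[ℂ] Pgen)) = tensorFunc φ ψ x := by
    intro x
    induction x using TensorProduct.induction_on with
    | zero => simp
    | add x1 x2 h1 h2 => simp only [add_mul, map_add, h1, h2]
    | tmul u v =>
      rw [Algebra.TensorProduct.tmul_mul_tmul, tensorFunc_tmul, tensorFunc_tmul, hφr, hψr]
  simp only [filtConv, LinearMap.comp_apply, AlgHom.toLinearMap_apply, map_mul, Cop_P]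
  exact key _

include hφsep hψsep in
theorem filtConv_core : ∀ ts : List Word, ts ≠ [] →
    filtConv φ ψ ((ts.map Xword).intersperse Pgen).prod
      = (ts.map (fun t => filtConv φ ψ (Xword t))).prod := by
  intro ts
  induction ts with
  | nil => intro h; exact absurd rfl h
  | cons t rest ih =>
    intro _
    cases rest with
    | nil => simp
    | cons t' rest' =>
      simp only [List.map_cons, List.intersperse_cons_cons, List.prod_cons]
      have ih' := ih (by simp)
      simp only [List.map_cons, List.prod_cons] at ih'
      rw [← mul_assoc, filtConv_sep φ ψ hφsep hψsep, ih']
end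

/-- `P` acts as a separator of words for the filtered convolution
`\hat μ ⋆ \hat ν`. -/
theorem filtConv_separator (μ ν : MeasureTheory.Measure ℝ)
    [MeasureTheory.IsProbabilityMeasure μ] [MeasureTheory.IsProbabilityMeasure ν]
    (hμ : ∀ n : ℕ, MeasureTheory.Integrable (fun x => x ^ n) μ)
    (hν : ∀ n : ℕ, MeasureTheory.Integrable (fun x => x ^ n) ν)
    (α β : ℕ) (hα : α ≤ 1) (hβ : β ≤ 1)
    (ts : List Word) (hts : ts ≠ []) :
    filtConv (hatL (mom μ)) (hatL (mom ν))
        (Pgen ^ α * ((ts.map Xword).intersperse Pgen).prod * Pgen ^ β) =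
      (ts.map (fun t => filtConv (hatL (mom μ)) (hatL (mom ν)) (Xword t))).prod := by
  set φ := hatL (mom μ) with hφ
  set ψ := hatL (mom ν) with hψ
  have hφsep : ∀ a b : B, φ (a * Pgen * b) = φ a * φ b := hatL_sep (mom μ)
  have hψsep : ∀ a b : B, ψ (a * Pgen * b) = ψ a * ψ b := hatL_sep (mom ν)
  have hφl := hatL_P_left (mom μ)
  have hψl := hatL_P_left (mom ν)
  have hφr := hatL_P_right (mom μ)
  have hψr := hatL_P_right (mom ν)
  have hR : ∀ x : B, filtConv φ ψ (x * Pgen ^ β) = filtConv φ ψ x := by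
    intro x
    interval_cases β
    · simp
    · rw [pow_one]; exact filtConv_P_right φ ψ hφr hψr x
  have hL : ∀ x : B, filtConv φ ψ (Pgen ^ α * x) = filtConv φ ψ x := by
    intro x
    interval_cases α
    · simp
    · rw [pow_one]; exact filtConv_P_left φ ψ hφl hψl x
  rw [hR, hL]
  exact filtConv_core φ ψ hφsep hψsep ts hts
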